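/- arXiv:2306.10446 — 3 statements merged into one kernel-verified Lean document; each statement's English description precedes it below -/
import Mathlib

section
/- Let k be a field with char k ∉ {2,3}, and let k⟦t⟧ be the ring of formal power series over k. Let v = (a,b,c,d) ∈ (k⟦t⟧)⁴ be a binary cubic form over k⟦t⟧ with Δ₃(v) ≠ 0, and let M ⊆ (k⟦t⟧)⁴ be the image of the k⟦t⟧-linear map M₂(k⟦t⟧) → (k⟦t⟧)⁴ sending X to X·v (the Lie algebra action). Then the quotient (k⟦t⟧)⁴ / M is a finite-dimensional k-vector space of dimension equal to the t-adic order of Δ₃(v). -/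
/-- The discriminant of the binary cubic form `a·x³ + b·x²y + c·xy² + d·y³`. -/
def disc3 {R : Type*} [CommRing R] (a b c d : R) : R :=
  b ^ 2 * c ^ 2 - 4 * a * c ^ 3 - 4 * b ^ 3 * d - 27 * a ^ 2 * d ^ 2 + 18 * a * b * c * d

/-- The Lie algebra action of `M₂(R)` on binary cubic forms, in coordinates:
for `X = [[α,β],[γ,δ]]` and `f ↔ (a,b,c,d)`,
`X·(a,b,c,d) = ((2α−δ)a + βb, 3γa + αb + 2βc, 2γb + δc + 3βd, γc + (2δ−α)d)`. -/
def lieAct3 {R : Type*} [CommRing R] (X : Matrix (Fin 2) (Fin 2) R) (v : Fin 4 → R) :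
    Fin 4 → R :=
  ![(2 * X 0 0 - X 1 1) * v 0 + X 0 1 * v 1,
    3 * X 1 0 * v 0 + X 0 0 * v 1 + 2 * X 0 1 * v 2,
    2 * X 1 0 * v 1 + X 1 1 * v 2 + 3 * X 0 1 * v 3,
    X 1 0 * v 2 + (2 * X 1 1 - X 0 0) * v 3]

namespace BinaryCubicAux

open PowerSeries Matrix

variable {k : Type*} [Field k]


lemma order_prod {ι : Type*} (s : Finset ι) (g : ι → PowerSeries k) :
    (∏ i ∈ s, g i).order = ∑ i ∈ s, (g i).order := by
  classical
  induction s using Finset.induction with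
  | empty => simp
  | insert a s' hi ih => rw [Finset.prod_insert hi, Finset.sum_insert hi, order_mul, ih]

lemma span_finrank (g : PowerSeries k) (hg : g ≠ 0) :
    FiniteDimensional k (PowerSeries k ⧸ Ideal.span {g}) ∧
    (Module.finrank k (PowerSeries k ⧸ Ideal.span {g}) : ℕ∞) = g.order := by
  have hlt : g.order < ⊤ := (order_finite_iff_ne_zero.mpr hg)
  set n : ℕ := g.order.lift hlt with hn
  -- span {g} = span {X^n}
  have hassoc : Associated ((X : PowerSeries k) ^ n) g := by
    refine ⟨Unit_of_divided_by_X_pow_order g, ?_⟩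
    rw [Unit_of_divided_by_X_pow_order_nonzero hg]
    exact (congrArg (fun m => (X : PowerSeries k) ^ m * divXPowOrder g)
      (by simp [hn, ENat.lift_eq_toNat_of_lt_top] : n = g.order.toNat)).trans X_pow_order_mul_divXPowOrder
  have hspan : Ideal.span {g} = Ideal.span {(X : PowerSeries k) ^ n} := by
    rw [Ideal.span_singleton_eq_span_singleton]
    exact hassoc.symm
  -- the truncation map
  let φ : PowerSeries k →ₗ[k] (Fin n → k) := LinearMap.pi fun i => PowerSeries.coeff (i : ℕ)
  have hsurj : Function.Surjective φ := by
    intro c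
    refine ⟨∑ i : Fin n, PowerSeries.monomial (i : ℕ) (c i), ?_⟩
    funext j
    simp only [φ, LinearMap.pi_apply, map_sum, PowerSeries.coeff_monomial]
    rw [Finset.sum_eq_single j]
    · simp
    · intro b _ hb
      exact if_neg fun h => hb ((Fin.val_injective h).symm)
    · simp
  have hker : LinearMap.ker φ = (Ideal.span {g}).restrictScalars k := by
    ext x
    simp only [LinearMap.mem_ker, Submodule.restrictScalars_mem, hspan,
      Ideal.mem_span_singleton, PowerSeries.X_pow_dvd_iff]
    constructor
    · intro h m hm
      have := congrFun h ⟨m, hm⟩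
      simpa [φ] using this
    · intro h
      funext i
      simpa [φ] using h i i.2
  have E : (PowerSeries k ⧸ Ideal.span {g}) ≃ₗ[k] (Fin n → k) := by
    have E1 : (PowerSeries k ⧸ (Ideal.span {g}).restrictScalars k) ≃ₗ[k]
        (PowerSeries k ⧸ LinearMap.ker φ) := by rw [hker]
    exact ((Submodule.Quotient.restrictScalarsEquiv k ((Ideal.span {g}) :
      Submodule (PowerSeries k) (PowerSeries k))).symm.trans E1).trans
      (LinearMap.quotKerEquivOfSurjective φ hsurj)
  have fd : FiniteDimensional k (PowerSeries k ⧸ Ideal.span {g}) :=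
    Module.Finite.equiv E.symm
  refine ⟨fd, ?_⟩
  rw [E.finrank_eq, Module.finrank_pi]
  simp [hn]

set_option maxHeartbeats 2000000 in
lemma key (A : Matrix (Fin 4) (Fin 4) (PowerSeries k)) (hA : A.det ≠ 0) :
    FiniteDimensional k ((Fin 4 → PowerSeries k) ⧸ LinearMap.range A.mulVecLin) ∧
    (Module.finrank k ((Fin 4 → PowerSeries k) ⧸ LinearMap.range A.mulVecLin) : ℕ∞)
      = (A.det).order := by
  set N : Submodule (PowerSeries k) (Fin 4 → PowerSeries k) := LinearMap.range A.mulVecLin with hNdef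
  have hinj : Function.Injective A.mulVecLin := by
    intro x y h
    have h' : A *ᵥ x = A *ᵥ y := h
    have h2 : A.adjugate *ᵥ (A *ᵥ x) = A.adjugate *ᵥ (A *ᵥ y) := by rw [h']
    rw [Matrix.mulVec_mulVec, Matrix.mulVec_mulVec, Matrix.adjugate_mul,
      Matrix.smul_mulVec, Matrix.smul_mulVec, Matrix.one_mulVec,
      Matrix.one_mulVec] at h2
    funext i
    have := congrFun h2 i
    simp only [Pi.smul_apply, smul_eq_mul] at this
    exact mul_left_cancel₀ hA this
  set e0 : Module.Basis (Fin 4) (PowerSeries k) (Fin 4 → PowerSeries k) := Pi.basisFun (PowerSeries k) (Fin 4) with he0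
  let bA : Module.Basis (Fin 4) (PowerSeries k) N := e0.map (LinearEquiv.ofInjective A.mulVecLin hinj)
  have hbA : ∀ j r, (bA j : Fin 4 → PowerSeries k) r = A r j := by
    intro j r
    show (A.mulVecLin (e0 j)) r = A r j
    simp [he0, Matrix.mulVecLin_apply, Matrix.mulVec_single_one]
  obtain ⟨m, snf⟩ := N.smithNormalForm e0
  have hm : m = 4 := by
    have h1 : Module.finrank (PowerSeries k) N = 4 := by
      rw [Module.finrank_eq_card_basis bA, Fintype.card_fin]
    have h2 : Module.finrank (PowerSeries k) N = m := by
      rw [Module.finrank_eq_card_basis snf.bN, Fintype.card_fin]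
    omega
  subst hm
  obtain ⟨bM, bN, f, a, hsnf⟩ := snf
  have hbij : Function.Bijective f := (Finite.injective_iff_bijective).mp f.injective
  set e : Equiv.Perm (Fin 4) := Equiv.ofBijective f hbij with he
  have hef : ∀ j, e j = f j := fun j => rfl
  -- determinant bookkeeping
  have hMat1 : e0.toMatrix (fun i => (bA i : Fin 4 → PowerSeries k)) = A := by
    apply Matrix.ext; intro r j
    rw [Module.Basis.toMatrix_apply]
    simp only [he0, Pi.basisFun_repr]
    exact hbA j r
  have hMat2 : e0.toMatrix (fun i => (bN i : Fin 4 → PowerSeries k))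
      = A * (bA.toMatrix (fun i => bN i)) := by
    apply Matrix.ext; intro r i
    rw [Module.Basis.toMatrix_apply, Matrix.mul_apply]
    simp only [he0, Pi.basisFun_repr]
    have hx : (bN i : Fin 4 → PowerSeries k)
        = ∑ j, bA.repr (bN i) j • (bA j : Fin 4 → PowerSeries k) := by
      have h1 := bA.sum_repr (bN i)
      calc (bN i : Fin 4 → PowerSeries k)
          = ((∑ j, bA.repr (bN i) j • bA j : N) : Fin 4 → PowerSeries k) := by rw [h1]
        _ = _ := by push_cast; rfl
    rw [hx]
    rw [Finset.sum_apply]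
    refine Finset.sum_congr rfl fun j _ => ?_
    rw [Pi.smul_apply, smul_eq_mul, hbA j r, Module.Basis.toMatrix_apply, mul_comm]
  have hMat3 : e0.toMatrix (fun i => (bN i : Fin 4 → PowerSeries k))
      = (e0.toMatrix (fun i => (bM (e i) : Fin 4 → PowerSeries k))) * Matrix.diagonal a := by
    apply Matrix.ext; intro r i
    rw [Matrix.mul_diagonal, Module.Basis.toMatrix_apply, Module.Basis.toMatrix_apply, hsnf i,
      _root_.map_smul, hef i]
    simp [mul_comm]
  have hu1 : IsUnit (bA.toMatrix (fun i => bN i)).det := by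
    rw [← Module.Basis.det_apply]
    exact bA.isUnit_det bN
  have hu2 : IsUnit (e0.toMatrix (fun i => (bM (e i) : Fin 4 → PowerSeries k))).det := by
    have : (fun i => bM (e i)) = (⇑bM ∘ ⇑e) := rfl
    rw [this, ← Module.Basis.det_apply]
    have hp := (e0.det).map_perm (⇑bM) e
    rw [hp]
    rcases Int.units_eq_one_or (Equiv.Perm.sign e) with h | h <;> rw [h]
    · simpa using e0.isUnit_det bM
    · simpa using (e0.isUnit_det bM).neg
  -- determinant relation
  have hdet : A.det * (bA.toMatrix (fun i => bN i)).det
      = (e0.toMatrix (fun i => (bM (e i) : Fin 4 → PowerSeries k))).det * ∏ i, a i := by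
    rw [← Matrix.det_mul, ← hMat2, hMat3, Matrix.det_mul, Matrix.det_diagonal]
  have horder : (A.det).order = (∏ i, a i).order := by
    have h1 := congrArg PowerSeries.order hdet
    rw [order_mul, order_mul, order_zero_of_unit hu1, order_zero_of_unit hu2,
      add_zero, zero_add] at h1
    exact h1
  have hprod_ne : (∏ i, a i) ≠ 0 := by
    intro h0
    rw [h0, mul_zero] at hdet
    exact (mul_ne_zero hA hu1.ne_zero) hdet
  have ha0 : ∀ i, a i ≠ 0 := fun i hi => hprod_ne (Finset.prod_eq_zero (Finset.mem_univ i) hi)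
  -- membership characterization
  have hfi : ∀ (j i : Fin 4), f j = i ↔ j = e.symm i := by
    intro j i
    rw [← hef j, ← Equiv.apply_eq_iff_eq_symm_apply]
  have hrepr : ∀ (c : Fin 4 → PowerSeries k) (i),
      bM.repr (∑ j, c j • (a j • bM (f j))) i = a (e.symm i) * c (e.symm i) := by
    intro c i
    rw [map_sum, Finsupp.finset_sum_apply]
    rw [Finset.sum_eq_single (e.symm i)]
    · rw [_root_.map_smul, _root_.map_smul, Module.Basis.repr_self, Finsupp.smul_single,
        Finsupp.smul_single, Finsupp.single_apply, if_pos ((hfi _ i).mpr rfl)]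
      simp [mul_comm]
    · intro j _ hj
      rw [_root_.map_smul, _root_.map_smul, Module.Basis.repr_self, Finsupp.smul_single,
        Finsupp.smul_single, Finsupp.single_apply, if_neg (fun h => hj ((hfi j i).mp h))]
    · simp
  have hmem : ∀ x, x ∈ N ↔ ∀ i, a (e.symm i) ∣ bM.repr x i := by
    intro x
    rw [bN.mem_submodule_iff']
    constructor
    · rintro ⟨c, rfl⟩ i
      refine ⟨c (e.symm i), ?_⟩
      have hx : ∑ j, c j • ((bN j : Fin 4 → PowerSeries k))
          = ∑ j, c j • (a j • bM (f j)) := by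
        refine Finset.sum_congr rfl fun j _ => ?_; rw [hsnf j]
      rw [hx, hrepr]
    · intro hdvd
      choose d hd using hdvd
      refine ⟨fun j => d (e j), ?_⟩
      apply bM.ext_elem
      intro i
      have hx : ∑ j, (fun j => d (e j)) j • ((bN j : Fin 4 → PowerSeries k))
          = ∑ j, (fun j => d (e j)) j • (a j • bM (f j)) := by
        refine Finset.sum_congr rfl fun j _ => ?_; rw [hsnf j]
      rw [hx, hrepr]
      rw [Equiv.apply_symm_apply]
      exact hd i
  -- quotient equivalence
  have hmap : Submodule.map (bM.equivFun : (Fin 4 → PowerSeries k) →ₗ[PowerSeries k]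
        (Fin 4 → PowerSeries k)) N
      = Submodule.pi Set.univ (fun i => Ideal.span {a (e.symm i)}) := by
    ext x
    simp only [Submodule.mem_map, Submodule.mem_pi, Set.mem_univ, forall_true_left,
      Ideal.mem_span_singleton]
    constructor
    · rintro ⟨y, hy, rfl⟩ i
      simpa [Module.Basis.equivFun_apply] using (hmem y).mp hy i
    · intro h
      refine ⟨bM.equivFun.symm x, (hmem _).mpr fun i => ?_,
        bM.equivFun.apply_symm_apply x⟩
      have hxx : bM.repr (bM.equivFun.symm x) i = x i := by
        have h2 := bM.equivFun.apply_symm_apply x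
        conv_rhs => rw [← h2]
        rw [Module.Basis.equivFun_apply]
      rw [hxx]
      exact h i
  let E1 := Submodule.Quotient.equiv N
    (Submodule.pi Set.univ (fun i => (Ideal.span {a (e.symm i)} :
      Submodule (PowerSeries k) (PowerSeries k)))) bM.equivFun hmap
  let E2 := Submodule.quotientPi (fun i : Fin 4 => (Ideal.span {a (e.symm i)} :
      Submodule (PowerSeries k) (PowerSeries k)))
  let E : ((Fin 4 → PowerSeries k) ⧸ N) ≃ₗ[k]
      ∀ i : Fin 4, PowerSeries k ⧸ (Ideal.span {a (e.symm i)} :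
        Submodule (PowerSeries k) (PowerSeries k)) :=
    (E1.trans E2).restrictScalars k
  have hsf := fun i : Fin 4 => span_finrank (a (e.symm i)) (ha0 (e.symm i))
  haveI : ∀ i : Fin 4, FiniteDimensional k
      (PowerSeries k ⧸ (Ideal.span {a (e.symm i)} :
        Submodule (PowerSeries k) (PowerSeries k))) := fun i => (hsf i).1
  haveI FD : FiniteDimensional k ((Fin 4 → PowerSeries k) ⧸ N) :=
    Module.Finite.equiv E.symm
  refine ⟨FD, ?_⟩
  rw [E.finrank_eq, Module.finrank_pi_fintype, Nat.cast_sum]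
  have hstep : ∀ i : Fin 4, (Module.finrank k (PowerSeries k ⧸ (Ideal.span {a (e.symm i)} :
      Submodule (PowerSeries k) (PowerSeries k))) : ℕ∞) = (a (e.symm i)).order :=
    fun i => (hsf i).2
  rw [Finset.sum_congr rfl (fun i _ => hstep i), horder, order_prod]
  exact (Equiv.sum_comp e.symm (fun j => (a j).order))


set_option maxHeartbeats 1000000 in
lemma det_aux {R : Type*} [CommRing R] (a b c d : R) :
    (!![2*a, b, 0, -a; b, 2*c, 3*a, 0; 0, 3*d, 2*b, c; -d, 0, c, 2*d]).det
      = disc3 a b c d := by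
  simp [Matrix.det_succ_row_zero, Fin.sum_univ_succ, disc3, Fin.succAbove,
    Matrix.cons_val_succ, Fin.castSucc, Fin.castAdd, Fin.castLE]
  ring

end BinaryCubicAux

set_option maxHeartbeats 1000000 in
/-- Let `k` be a field of characteristic not `2` or `3`, and let `v` be a binary cubic form
over `k⟦t⟧` with `Δ₃(v) ≠ 0`.  If `M ⊆ k⟦t⟧⁴` is the image of the Lie algebra action map
`M₂(k⟦t⟧) → k⟦t⟧⁴`, `X ↦ X·v`, then `k⟦t⟧⁴/M` is a finite-dimensional `k`-vector space of
dimension equal to the `t`-adic order of `Δ₃(v)`. -/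
theorem finrank_quotient_lieAct3_eq_order_disc3 {k : Type*} [Field k]
    (hchar2 : ringChar k ≠ 2) (hchar3 : ringChar k ≠ 3)
    (v : Fin 4 → PowerSeries k)
    (hv : disc3 (v 0) (v 1) (v 2) (v 3) ≠ 0)
    (M : Submodule (PowerSeries k) (Fin 4 → PowerSeries k))
    (hM : (M : Set (Fin 4 → PowerSeries k)) =
      Set.range (fun X : Matrix (Fin 2) (Fin 2) (PowerSeries k) => lieAct3 X v)) :
    FiniteDimensional k ((Fin 4 → PowerSeries k) ⧸ M) ∧
      (Module.finrank k ((Fin 4 → PowerSeries k) ⧸ M) : ℕ∞) =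
        PowerSeries.order (disc3 (v 0) (v 1) (v 2) (v 3)) := by
  set A : Matrix (Fin 4) (Fin 4) (PowerSeries k) :=
    !![2 * v 0, v 1, 0, -(v 0);
       v 1, 2 * v 2, 3 * v 0, 0;
       0, 3 * v 3, 2 * v 1, v 2;
       -(v 3), 0, v 2, 2 * v 3] with hA
  have hAct : ∀ X : Matrix (Fin 2) (Fin 2) (PowerSeries k),
      lieAct3 X v = A.mulVec ![X 0 0, X 0 1, X 1 0, X 1 1] := by
    intro X
    funext i
    fin_cases i <;>
      simp [lieAct3, hA, Matrix.mulVec, dotProduct, Fin.sum_univ_four] <;> ring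
  have hrange : M = LinearMap.range A.mulVecLin := by
    apply SetLike.coe_injective
    rw [hM]
    ext x
    simp only [Set.mem_range, SetLike.mem_coe, LinearMap.mem_range, Matrix.mulVecLin_apply]
    constructor
    · rintro ⟨X, rfl⟩
      exact ⟨![X 0 0, X 0 1, X 1 0, X 1 1], (hAct X).symm⟩
    · rintro ⟨w, rfl⟩
      refine ⟨Matrix.of ![![w 0, w 1], ![w 2, w 3]], ?_⟩
      rw [hAct]
      congr 1
      ext i; fin_cases i <;> rfl
  have hdet : A.det = disc3 (v 0) (v 1) (v 2) (v 3) := by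
    rw [hA]
    exact BinaryCubicAux.det_aux (v 0) (v 1) (v 2) (v 3)
  subst hrange
  have h := BinaryCubicAux.key A (by rw [hdet]; exact hv)
  rw [hdet] at h
  exact h
end

section
/- Let R be a commutative ring in which 6 is invertible, and let v = (a,b,c,d) ∈ R⁴ be a binary cubic form over R with Δ₃(v) a unit of R. Then the R-linear map M₂(R) → R⁴ sending X to X·v (the Lie algebra action) is bijective. -/
/-- If `6` is invertible in a commutative ring `R` and `v` is a binary cubic form over `R`
whose discriminant is a unit, then the Lie algebra action map `M₂(R) → R⁴`, `X ↦ X·v`,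
is bijective. -/
theorem lieAct3_bijective_of_isUnit_disc {R : Type*} [CommRing R]
    (h6 : IsUnit (6 : R)) (v : Fin 4 → R)
    (hv : IsUnit (disc3 (v 0) (v 1) (v 2) (v 3))) :
    Function.Bijective (fun X : Matrix (Fin 2) (Fin 2) R => lieAct3 X v) := by

  classical
  set a := v 0
  set b := v 1
  set c := v 2
  set d := v 3
  let M : Matrix (Fin 4) (Fin 4) R :=
    !![2*a, b, 0, -a; b, 2*c, 3*a, 0; 0, 3*d, 2*b, c; -d, 0, c, 2*d]
  have hdet : IsUnit M.det := by
    have hM : M.det = disc3 a b c d := by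
      simp [M, Matrix.det_succ_row_zero, Fin.sum_univ_succ, disc3, Fin.succAbove]; ring
    rw [hM]; exact hv
  have := M.invertibleOfIsUnitDet hdet
  have hli : Function.LeftInverse (⅟M).mulVec M.mulVec := fun w => by
    rw [Matrix.mulVec_mulVec, invOf_mul_self, Matrix.one_mulVec]
  have hri : Function.RightInverse (⅟M).mulVec M.mulVec := fun w => by
    rw [Matrix.mulVec_mulVec, mul_invOf_self, Matrix.one_mulVec]
  have hmv : Function.Bijective M.mulVec := ⟨hli.injective, hri.surjective⟩
  let e : Matrix (Fin 2) (Fin 2) R ≃ (Fin 4 → R) :=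
  { toFun := fun X => ![X 0 0, X 0 1, X 1 0, X 1 1]
    invFun := fun w => !![w 0, w 1; w 2, w 3]
    left_inv := fun X => by
      ext i j; fin_cases i <;> fin_cases j <;> simp
    right_inv := fun w => by
      funext i; fin_cases i <;> simp }
  have key : (fun X : Matrix (Fin 2) (Fin 2) R => lieAct3 X v) = M.mulVec ∘ e := by
    funext X
    funext i
    fin_cases i <;>
      simp [lieAct3, M, e, Matrix.mulVec, dotProduct, Fin.sum_univ_four, a, b, c, d] <;>
      ring
  rw [key]
  exact hmv.comp e.bijective
end

section
/- Let F be a finite field of cardinality q with q coprime to 6. Then the number of quadruples v ∈ F⁴ (binary cubic forms over F) with Δ₃(v) ≠ 0 equals q(q−1)(q²−1), i.e. q⁴·(1 − q⁻¹)(1 − q⁻²). -/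
/-- Parametrization of binary cubic forms with a repeated linear factor:
`some t` gives `(x + t·y)² (u·x + v·y)`, `none` gives `y² (u·x + v·y)`. -/
def cubParam {F : Type*} [Field F] : Option F → F × F → (Fin 4 → F)
  | some t, p => ![p.1, p.2 + 2 * t * p.1, 2 * t * p.2 + t ^ 2 * p.1, t ^ 2 * p.2]
  | none, p => ![0, 0, p.1, p.2]

lemma disc3_cubParam {F : Type*} [Field F] (l : Option F) (p : F × F) :
    disc3 (cubParam l p 0) (cubParam l p 1) (cubParam l p 2) (cubParam l p 3) = 0 := by
  obtain ⟨u, v⟩ := p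
  cases l with
  | some t => simp only [cubParam, disc3, Matrix.cons_val_zero, Matrix.cons_val_one,
      Matrix.head_cons]; ring_nf; simp [Matrix.cons_val_fin_one]; ring_nf
  | none => simp only [cubParam, disc3, Matrix.cons_val_zero, Matrix.cons_val_one,
      Matrix.head_cons]; ring_nf

lemma cubParam_injective {F : Type*} [Field F] (l : Option F) :
    Function.Injective (cubParam (F := F) l) := by
  rintro ⟨u, v⟩ ⟨u', v'⟩ h
  cases l with
  | some t =>
    have h0 := congrFun h 0
    have h1 := congrFun h 1
    simp [cubParam] at h0 h1
    subst h0
    simp at h1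
    simp [h1]
  | none =>
    have h2 := congrFun h 2
    have h3 := congrFun h 3
    simp [cubParam] at h2 h3
    simp [h2, h3]

lemma cubParam_zero {F : Type*} [Field F] (l : Option F) : cubParam l (0 : F × F) = 0 := by
  cases l <;> · funext i; fin_cases i <;> simp [cubParam]

lemma cubParam_disjoint {F : Type*} [Field F] (htwo : (2 : F) ≠ 0)
    {l l' : Option F} (hne : l ≠ l') {p p' : F × F} (hp : p ≠ 0) :
    cubParam l p ≠ cubParam l' p' := by
  obtain ⟨u, v⟩ := p
  obtain ⟨u', v'⟩ := p'
  intro heq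
  have h0 := congrFun heq 0
  have h1 := congrFun heq 1
  have h2 := congrFun heq 2
  have h3 := congrFun heq 3
  cases l with
  | some t =>
    cases l' with
    | some t' =>
      have ht : t ≠ t' := fun h => hne (by rw [h])
      simp only [cubParam, Matrix.cons_val_zero, Matrix.cons_val_one, Matrix.head_cons,
        Matrix.cons_val_two, Matrix.cons_val_three, Matrix.tail_cons] at h0 h1 h2 h3
      have htt : t' - t ≠ 0 := sub_ne_zero.mpr (Ne.symm ht)
      subst h0
      have k1 : 2 * v = u * (3 * t' - t) := by
        apply mul_left_cancel₀ htt
        linear_combination 2 * t' * h1 - h2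
      have k2 : v * (t + t') = 2 * u * t' ^ 2 := by
        apply mul_left_cancel₀ htt
        linear_combination t' ^ 2 * h1 - h3
      have hu : u = 0 := by
        have key : u * (t - t') ^ 2 = 0 := by linear_combination (t + t') * k1 - 2 * k2
        rcases mul_eq_zero.mp key with h | h
        · exact h
        · exact absurd h (pow_ne_zero _ (sub_ne_zero.mpr ht))
      have hv : v = 0 := by
        have : 2 * v = 0 := by rw [k1, hu]; ring
        rcases mul_eq_zero.mp this with h | h
        · exact absurd h htwo
        · exact h
      exact hp (by simp [hu, hv])
    | none =>
      simp only [cubParam, Matrix.cons_val_zero, Matrix.cons_val_one, Matrix.head_cons] at h0 h1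
      subst h0
      simp at h1
      exact hp (by simp [h1])
  | none =>
    cases l' with
    | some t' =>
      simp only [cubParam, Matrix.cons_val_zero, Matrix.cons_val_one, Matrix.head_cons,
        Matrix.cons_val_two, Matrix.cons_val_three, Matrix.tail_cons] at h0 h1 h2 h3
      have hu' : u' = 0 := h0.symm
      subst hu'
      have hv' : v' = 0 := by linear_combination -h1
      subst hv'
      have hu : u = 0 := by linear_combination h2
      have hv : v = 0 := by linear_combination h3
      exact hp (by simp [hu, hv])
    | none => exact hne rfl

lemma cubParam_surj {F : Type*} [Field F] (htwo : (2 : F) ≠ 0) (hthree : (3 : F) ≠ 0)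
    {a b c d : F} (h : disc3 a b c d = 0) :
    ∃ l p, cubParam l p = ![a, b, c, d] := by
  unfold disc3 at h
  by_cases ha : a = 0
  · subst ha
    by_cases hb : b = 0
    · subst hb
      refine ⟨none, (c, d), ?_⟩
      funext i; fin_cases i <;> simp [cubParam]
    · -- a = 0, b ≠ 0 : c² = 4bd, double root at x = -c/(2b) : form = (x + (c/(2b)) y)² (b y)
      have hcd : c ^ 2 = 4 * b * d := by
        have key : b ^ 2 * (c ^ 2 - 4 * b * d) = 0 := by linear_combination h
        rcases mul_eq_zero.mp key with h' | h'
        · exact absurd h' (pow_ne_zero _ hb)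
        · exact sub_eq_zero.mp h'
      refine ⟨some (c / (2 * b)), (0, b), ?_⟩
      have h2b : (2 : F) * b ≠ 0 := mul_ne_zero htwo hb
      have e1 : b + 2 * (c / (2 * b)) * 0 = b := by ring
      have e2 : 2 * (c / (2 * b)) * b + (c / (2 * b)) ^ 2 * 0 = c := by
        field_simp
        ring
      have e3 : (c / (2 * b)) ^ 2 * b = d := by
        field_simp
        linear_combination hcd
      funext i; fin_cases i
      · rfl
      · exact e1
      · exact e2
      · exact e3
  · by_cases he : 3 * a * c - b ^ 2 = 0
    · -- triple root case : b² = 3ac and b³ = 27a²d, root at -b/(3a)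
      have key : b ^ 3 = 27 * a ^ 2 * d := by
        have sq : (b ^ 3 - 27 * a ^ 2 * d) ^ 2 = 0 := by
          linear_combination (-27 * a ^ 2) * h -
            (b ^ 4 + 3 * a * b ^ 2 * c + 36 * a ^ 2 * c ^ 2 - 162 * a ^ 2 * b * d) * he
        have := pow_eq_zero_iff (n := 2) (by norm_num) |>.mp sq
        exact sub_eq_zero.mp this
      have hbc : b ^ 2 = 3 * a * c := (sub_eq_zero.mp he).symm
      have h3a : (3 : F) * a ≠ 0 := mul_ne_zero hthree ha
      refine ⟨some (b / (3 * a)), (a, b / 3), ?_⟩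
      have e1 : b / 3 + 2 * (b / (3 * a)) * a = b := by field_simp; ring
      have e2 : 2 * (b / (3 * a)) * (b / 3) + (b / (3 * a)) ^ 2 * a = c := by
        field_simp
        linear_combination 3 * hbc
      have e3 : (b / (3 * a)) ^ 2 * (b / 3) = d := by
        field_simp
        linear_combination key
      funext i; fin_cases i
      · rfl
      · exact e1
      · exact e2
      · exact e3
    · -- double root at r = (bc - 9ad)/(2(3ac - b²))
      set e := 3 * a * c - b ^ 2 with he_def
      set rn := b * c - 9 * a * d with hrn_def
      have h2e : 2 * e ≠ 0 := mul_ne_zero htwo he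
      set r := rn / (2 * e) with hr_def
      have hg' : 3 * a * r ^ 2 + 2 * b * r + c = 0 := by
        have expand : (2 * e) ^ 2 * (3 * a * r ^ 2 + 2 * b * r + c)
            = 3 * a * rn ^ 2 + 4 * b * rn * e + 4 * c * e ^ 2 := by
          rw [hr_def]; field_simp; ring
        have cert : 3 * a * rn ^ 2 + 4 * b * rn * e + 4 * c * e ^ 2 = 0 := by
          rw [hrn_def, he_def]; linear_combination (-9 * a) * h
        have := expand.trans cert
        rcases mul_eq_zero.mp this with h' | h'
        · exact absurd h' (pow_ne_zero _ h2e)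
        · exact h'
      have hg : a * r ^ 3 + b * r ^ 2 + c * r + d = 0 := by
        have expand : (2 * e) ^ 3 * (a * r ^ 3 + b * r ^ 2 + c * r + d)
            = a * rn ^ 3 + 2 * b * rn ^ 2 * e + 4 * c * rn * e ^ 2 + 8 * d * e ^ 3 := by
          rw [hr_def]; field_simp; ring
        have cert : a * rn ^ 3 + 2 * b * rn ^ 2 * e + 4 * c * rn * e ^ 2 + 8 * d * e ^ 3 = 0 := by
          rw [hrn_def, he_def]
          linear_combination (2 * b ^ 3 - 9 * a * b * c + 27 * a ^ 2 * d) * h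
        have := expand.trans cert
        rcases mul_eq_zero.mp this with h' | h'
        · exact absurd h' (pow_ne_zero _ h2e)
        · exact h'
      refine ⟨some (-r), (a, b + 2 * r * a), ?_⟩
      have e1 : b + 2 * r * a + 2 * (-r) * a = b := by ring
      have e2 : 2 * (-r) * (b + 2 * r * a) + (-r) ^ 2 * a = c := by
        linear_combination -hg'
      have e3 : (-r) ^ 2 * (b + 2 * r * a) = d := by
        linear_combination -hg + r * hg'
      funext i; fin_cases i
      · rfl
      · exact e1
      · exact e2
      · exact e3

lemma cubic_count_arith (q N : ℕ) (hq2 : 2 ≤ q)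
    (hN : N + ((q + 1) * (q ^ 2 - 1) + 1) = q ^ 4) : N = q * (q - 1) * (q ^ 2 - 1) := by
  obtain ⟨k, rfl⟩ : ∃ k, q = k + 2 := ⟨q - 2, by omega⟩
  have e2 : (k + 2) ^ 2 - 1 = k ^ 2 + 4 * k + 3 := by
    have : (k + 2) ^ 2 = k ^ 2 + 4 * k + 4 := by ring
    omega
  rw [e2] at hN ⊢
  rw [show k + 2 - 1 = k + 1 by omega]
  have hrhs : (k + 2) * (k + 1) * (k ^ 2 + 4 * k + 3)
      + ((k + 2 + 1) * (k ^ 2 + 4 * k + 3) + 1) = (k + 2) ^ 4 := by ring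
  exact Nat.add_right_cancel (hN.trans hrhs.symm)

/-- Over a finite field `F` of cardinality `q` coprime to `6`, the number of binary cubic
forms over `F` with nonzero discriminant is `q(q−1)(q²−1)`. -/
theorem card_binaryCubics_disc_ne_zero (F : Type*) [Field F] [Fintype F] (q : ℕ)
    (hq : Fintype.card F = q) (hco : Nat.Coprime q 6) :
    Nat.card {v : Fin 4 → F // disc3 (v 0) (v 1) (v 2) (v 3) ≠ 0} =
      q * (q - 1) * (q ^ 2 - 1) := by
  classical
  -- characteristic facts
  have hchar : ∀ n : ℕ, n ∣ 6 → ((n : F) = 0) → False := by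
    intro n hn h
    have d1 : ringChar F ∣ n := ringChar.dvd h
    have d2 : ringChar F ∣ q := by
      rw [← hq]; exact ringChar.dvd (FiniteField.cast_card_eq_zero F)
    have : ringChar F ∣ Nat.gcd q 6 := Nat.dvd_gcd d2 (d1.trans hn)
    rw [hco] at this
    have h1 : ringChar F = 1 := Nat.dvd_one.mp this
    have := CharP.cast_eq_zero F (ringChar F)
    rw [h1] at this
    simp at this
  have htwo : (2 : F) ≠ 0 := fun h => hchar 2 (by norm_num) (by exact_mod_cast h)
  have hthree : (3 : F) ≠ 0 := fun h => hchar 3 (by norm_num) (by exact_mod_cast h)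
  -- the singular locus
  set S : Finset (Fin 4 → F) :=
    Finset.univ.filter (fun v => disc3 (v 0) (v 1) (v 2) (v 3) = 0) with hS_def
  set B : Finset (Fin 4 → F) :=
    Finset.univ.biUnion
      (fun l : Option F => ((Finset.univ : Finset (F × F)).filter (· ≠ 0)).image (cubParam l))
    with hB_def
  have hSB : S = insert 0 B := by
    ext v
    simp only [hS_def, hB_def, Finset.mem_filter, Finset.mem_univ, true_and,
      Finset.mem_insert, Finset.mem_biUnion, Finset.mem_image]
    constructor
    · intro hv
      have hv4 : v = ![v 0, v 1, v 2, v 3] := by funext i; fin_cases i <;> rfl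
      obtain ⟨l, p, hlp⟩ := cubParam_surj htwo hthree hv
      by_cases hp : p = 0
      · left; rw [hv4, ← hlp, hp, cubParam_zero]
      · right; exact ⟨l, p, hp, by rw [hlp, ← hv4]⟩
    · rintro (rfl | ⟨l, p, -, rfl⟩)
      · simp [disc3]
      · exact disc3_cubParam l p
  have hzero_notmem : (0 : Fin 4 → F) ∉ B := by
    simp only [hB_def, Finset.mem_biUnion, Finset.mem_image, Finset.mem_filter,
      Finset.mem_univ, true_and, not_exists, not_and]
    rintro l p hp heq
    exact hp (cubParam_injective l (by rw [heq, cubParam_zero]))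
  have hfilter_card : ((Finset.univ : Finset (F × F)).filter (· ≠ 0)).card = q ^ 2 - 1 := by
    rw [Finset.filter_ne', Finset.card_erase_of_mem (Finset.mem_univ _), Finset.card_univ,
      Fintype.card_prod, hq]
    ring_nf
  have hB_card : B.card = (q + 1) * (q ^ 2 - 1) := by
    rw [hB_def, Finset.card_biUnion]
    · rw [Finset.sum_congr rfl (fun l _ => ?_), Finset.sum_const, Finset.card_univ,
        Fintype.card_option, hq, smul_eq_mul]
      rw [Finset.card_image_of_injective _ (cubParam_injective l), hfilter_card]
    · intro l _ l' _ hll'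
      rw [Function.onFun, Finset.disjoint_left]
      rintro x hx hx'
      simp only [Finset.mem_image, Finset.mem_filter, Finset.mem_univ, true_and] at hx hx'
      obtain ⟨p, hp, rfl⟩ := hx
      obtain ⟨p', hp', heq⟩ := hx'
      exact cubParam_disjoint htwo hll' hp heq.symm
  have hS_card : S.card = (q + 1) * (q ^ 2 - 1) + 1 := by
    rw [hSB, Finset.card_insert_of_notMem hzero_notmem, hB_card]
  -- relate to the complement
  have hmain : Nat.card {v : Fin 4 → F // disc3 (v 0) (v 1) (v 2) (v 3) ≠ 0}
      = (Finset.univ.filter (fun v : Fin 4 → F => disc3 (v 0) (v 1) (v 2) (v 3) ≠ 0)).card := by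
    rw [Nat.card_eq_fintype_card, Fintype.card_subtype]
  have hsplit := Finset.card_filter_add_card_filter_not
    (s := (Finset.univ : Finset (Fin 4 → F)))
    (p := fun v => disc3 (v 0) (v 1) (v 2) (v 3) ≠ 0)
  have hneg : (Finset.univ.filter
      (fun v : Fin 4 → F => ¬ disc3 (v 0) (v 1) (v 2) (v 3) ≠ 0)) = S := by
    rw [hS_def]
    congr 1
    ext v
    simp [not_not]
  rw [hneg] at hsplit
  have htotal : (Finset.univ : Finset (Fin 4 → F)).card = q ^ 4 := by
    rw [Finset.card_univ, Fintype.card_fun, hq, Fintype.card_fin]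
  rw [htotal, hS_card] at hsplit
  -- arithmetic
  have hq2 : 2 ≤ q := by rw [← hq]; exact Fintype.one_lt_card
  rw [hmain]
  exact cubic_count_arith q _ hq2 hsplit
end
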